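/- arXiv:0804.1490 — 2 statements merged into one kernel-verified Lean document; each statement's English description precedes it below -/
import Mathlib

section
/- ζ₈ = e^{iπ/4} is not a norm of the quadratic extension ℚ(ζ₈, √5)/ℚ(ζ₈): for every z ∈ K = ℚ(ζ₈, √5), one has z·σ(z) ≠ ζ₈. Equivalently, for all a, b ∈ ℚ(ζ₈), a² + a·b − b² ≠ ζ₈. -/
open Complex

/-- The eighth root of unity `ζ₈ = e^{iπ/4}`. -/
noncomputable def ζ₈ : ℂ := Complex.exp (Real.pi * Complex.I / 4)

/-- The golden ratio `θ = (1+√5)/2` as a complex number. -/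
noncomputable def θ : ℂ := (((1 + Real.sqrt 5) / 2 : ℝ) : ℂ)

/-- Its conjugate `θ̄ = (1−√5)/2` as a complex number. -/
noncomputable def θbar : ℂ := (((1 - Real.sqrt 5) / 2 : ℝ) : ℂ)

/-- The subfield `F = ℚ(ζ₈) = {p + q·ζ₈ + r·ζ₈² + s·ζ₈³ : p, q, r, s ∈ ℚ}` of `ℂ`, as a set. -/
noncomputable def Fset : Set ℂ :=
  {z | ∃ p q r s : ℚ, z = (p : ℂ) + (q : ℂ) * ζ₈ + (r : ℂ) * ζ₈ ^ 2 + (s : ℂ) * ζ₈ ^ 3}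

/-! ### Auxiliary machinery: coordinates in `ℤ[ζ₈] ≅ ℤ[X]/(X⁴+1)` -/

def gm0 {R : Type} [CommRing R] (x0 x1 x2 x3 y0 y1 y2 y3 : R) : R :=
  x0*y0 - x1*y3 - x2*y2 - x3*y1
def gm1 {R : Type} [CommRing R] (x0 x1 x2 x3 y0 y1 y2 y3 : R) : R :=
  x0*y1 + x1*y0 - x2*y3 - x3*y2
def gm2 {R : Type} [CommRing R] (x0 x1 x2 x3 y0 y1 y2 y3 : R) : R :=
  x0*y2 + x1*y1 + x2*y0 - x3*y3
def gm3 {R : Type} [CommRing R] (x0 x1 x2 x3 y0 y1 y2 y3 : R) : R :=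
  x0*y3 + x1*y2 + x2*y1 + x3*y0

def gq0 {R : Type} [CommRing R] (a0 a1 a2 a3 b0 b1 b2 b3 : R) : R :=
  gm0 a0 a1 a2 a3 a0 a1 a2 a3 + gm0 a0 a1 a2 a3 b0 b1 b2 b3 - gm0 b0 b1 b2 b3 b0 b1 b2 b3
def gq1 {R : Type} [CommRing R] (a0 a1 a2 a3 b0 b1 b2 b3 : R) : R :=
  gm1 a0 a1 a2 a3 a0 a1 a2 a3 + gm1 a0 a1 a2 a3 b0 b1 b2 b3 - gm1 b0 b1 b2 b3 b0 b1 b2 b3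
def gq2 {R : Type} [CommRing R] (a0 a1 a2 a3 b0 b1 b2 b3 : R) : R :=
  gm2 a0 a1 a2 a3 a0 a1 a2 a3 + gm2 a0 a1 a2 a3 b0 b1 b2 b3 - gm2 b0 b1 b2 b3 b0 b1 b2 b3
def gq3 {R : Type} [CommRing R] (a0 a1 a2 a3 b0 b1 b2 b3 : R) : R :=
  gm3 a0 a1 a2 a3 a0 a1 a2 a3 + gm3 a0 a1 a2 a3 b0 b1 b2 b3 - gm3 b0 b1 b2 b3 b0 b1 b2 b3

def gs0 {R : Type} [CommRing R] (c0 c1 c2 c3 : R) : R := gm0 c0 c1 c2 c3 c0 c1 c2 c3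
def gs1 {R : Type} [CommRing R] (c0 c1 c2 c3 : R) : R := gm1 c0 c1 c2 c3 c0 c1 c2 c3
def gs2 {R : Type} [CommRing R] (c0 c1 c2 c3 : R) : R := gm2 c0 c1 c2 c3 c0 c1 c2 c3
def gs3 {R : Type} [CommRing R] (c0 c1 c2 c3 : R) : R := gm3 c0 c1 c2 c3 c0 c1 c2 c3

/-! `X` (i.e. `ζ₈`) is not a square in `𝔽₅[X]/(X⁴+1)`, and that ring is reduced. -/

theorem fact1 : ∀ c0 c1 c2 c3 m : ZMod 5,
    gs0 c0 c1 c2 c3 = 0 → gs1 c0 c1 c2 c3 = m^2 → gs2 c0 c1 c2 c3 = 0 →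
    gs3 c0 c1 c2 c3 = 0 → m = 0 := by decide

theorem fact2 : ∀ c0 c1 c2 c3 : ZMod 5,
    gs0 c0 c1 c2 c3 = 0 → gs1 c0 c1 c2 c3 = 0 → gs2 c0 c1 c2 c3 = 0 →
    gs3 c0 c1 c2 c3 = 0 → c0 = 0 ∧ c1 = 0 ∧ c2 = 0 ∧ c3 = 0 := by decide

section Ids
variable {R : Type} [CommRing R]

theorem id0 (a0 a1 a2 a3 b0 b1 b2 b3 : R) :
    gq0 a0 a1 a2 a3 b0 b1 b2 b3 =
      gs0 (a0+3*b0) (a1+3*b1) (a2+3*b2) (a3+3*b3)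
      + 5 * (gs0 b0 b1 b2 b3 - gm0 (a0+3*b0) (a1+3*b1) (a2+3*b2) (a3+3*b3) b0 b1 b2 b3) := by
  simp only [gq0, gs0, gm0]; ring
theorem id1 (a0 a1 a2 a3 b0 b1 b2 b3 : R) :
    gq1 a0 a1 a2 a3 b0 b1 b2 b3 =
      gs1 (a0+3*b0) (a1+3*b1) (a2+3*b2) (a3+3*b3)
      + 5 * (gs1 b0 b1 b2 b3 - gm1 (a0+3*b0) (a1+3*b1) (a2+3*b2) (a3+3*b3) b0 b1 b2 b3) := by
  simp only [gq1, gs1, gm1]; ring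
theorem id2 (a0 a1 a2 a3 b0 b1 b2 b3 : R) :
    gq2 a0 a1 a2 a3 b0 b1 b2 b3 =
      gs2 (a0+3*b0) (a1+3*b1) (a2+3*b2) (a3+3*b3)
      + 5 * (gs2 b0 b1 b2 b3 - gm2 (a0+3*b0) (a1+3*b1) (a2+3*b2) (a3+3*b3) b0 b1 b2 b3) := by
  simp only [gq2, gs2, gm2]; ring
theorem id3 (a0 a1 a2 a3 b0 b1 b2 b3 : R) :
    gq3 a0 a1 a2 a3 b0 b1 b2 b3 =
      gs3 (a0+3*b0) (a1+3*b1) (a2+3*b2) (a3+3*b3)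
      + 5 * (gs3 b0 b1 b2 b3 - gm3 (a0+3*b0) (a1+3*b1) (a2+3*b2) (a3+3*b3) b0 b1 b2 b3) := by
  simp only [gq3, gs3, gm3]; ring

theorem idb0 (d0 d1 d2 d3 b0 b1 b2 b3 : R) :
    gq0 (5*d0-3*b0) (5*d1-3*b1) (5*d2-3*b2) (5*d3-3*b3) b0 b1 b2 b3 =
      25 * gs0 d0 d1 d2 d3 + 5 * gs0 b0 b1 b2 b3 - 25 * gm0 d0 d1 d2 d3 b0 b1 b2 b3 := by
  simp only [gq0, gs0, gm0]; ring
theorem idb1 (d0 d1 d2 d3 b0 b1 b2 b3 : R) :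
    gq1 (5*d0-3*b0) (5*d1-3*b1) (5*d2-3*b2) (5*d3-3*b3) b0 b1 b2 b3 =
      25 * gs1 d0 d1 d2 d3 + 5 * gs1 b0 b1 b2 b3 - 25 * gm1 d0 d1 d2 d3 b0 b1 b2 b3 := by
  simp only [gq1, gs1, gm1]; ring
theorem idb2 (d0 d1 d2 d3 b0 b1 b2 b3 : R) :
    gq2 (5*d0-3*b0) (5*d1-3*b1) (5*d2-3*b2) (5*d3-3*b3) b0 b1 b2 b3 =
      25 * gs2 d0 d1 d2 d3 + 5 * gs2 b0 b1 b2 b3 - 25 * gm2 d0 d1 d2 d3 b0 b1 b2 b3 := by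
  simp only [gq2, gs2, gm2]; ring
theorem idb3 (d0 d1 d2 d3 b0 b1 b2 b3 : R) :
    gq3 (5*d0-3*b0) (5*d1-3*b1) (5*d2-3*b2) (5*d3-3*b3) b0 b1 b2 b3 =
      25 * gs3 d0 d1 d2 d3 + 5 * gs3 b0 b1 b2 b3 - 25 * gm3 d0 d1 d2 d3 b0 b1 b2 b3 := by
  simp only [gq3, gs3, gm3]; ring

theorem idc0 (d0 d1 d2 d3 e0 e1 e2 e3 : R) :
    gq0 (5*d0-3*(5*e0)) (5*d1-3*(5*e1)) (5*d2-3*(5*e2)) (5*d3-3*(5*e3)) (5*e0) (5*e1) (5*e2) (5*e3) =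
      25 * gq0 (d0-3*e0) (d1-3*e1) (d2-3*e2) (d3-3*e3) e0 e1 e2 e3 := by
  simp only [gq0, gm0]; ring
theorem idc1 (d0 d1 d2 d3 e0 e1 e2 e3 : R) :
    gq1 (5*d0-3*(5*e0)) (5*d1-3*(5*e1)) (5*d2-3*(5*e2)) (5*d3-3*(5*e3)) (5*e0) (5*e1) (5*e2) (5*e3) =
      25 * gq1 (d0-3*e0) (d1-3*e1) (d2-3*e2) (d3-3*e3) e0 e1 e2 e3 := by
  simp only [gq1, gm1]; ring
theorem idc2 (d0 d1 d2 d3 e0 e1 e2 e3 : R) :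
    gq2 (5*d0-3*(5*e0)) (5*d1-3*(5*e1)) (5*d2-3*(5*e2)) (5*d3-3*(5*e3)) (5*e0) (5*e1) (5*e2) (5*e3) =
      25 * gq2 (d0-3*e0) (d1-3*e1) (d2-3*e2) (d3-3*e3) e0 e1 e2 e3 := by
  simp only [gq2, gm2]; ring
theorem idc3 (d0 d1 d2 d3 e0 e1 e2 e3 : R) :
    gq3 (5*d0-3*(5*e0)) (5*d1-3*(5*e1)) (5*d2-3*(5*e2)) (5*d3-3*(5*e3)) (5*e0) (5*e1) (5*e2) (5*e3) =
      25 * gq3 (d0-3*e0) (d1-3*e1) (d2-3*e2) (d3-3*e3) e0 e1 e2 e3 := by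
  simp only [gq3, gm3]; ring
end Ids

theorem cast_gq0 (a0 a1 a2 a3 b0 b1 b2 b3 : ℤ) :
    ((gq0 a0 a1 a2 a3 b0 b1 b2 b3 : ℤ) : ZMod 5) =
      gq0 (a0:ZMod 5) a1 a2 a3 b0 b1 b2 b3 := by
  simp only [gq0, gm0]; push_cast; ring
theorem cast_gq1 (a0 a1 a2 a3 b0 b1 b2 b3 : ℤ) :
    ((gq1 a0 a1 a2 a3 b0 b1 b2 b3 : ℤ) : ZMod 5) =
      gq1 (a0:ZMod 5) a1 a2 a3 b0 b1 b2 b3 := by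
  simp only [gq1, gm1]; push_cast; ring
theorem cast_gq2 (a0 a1 a2 a3 b0 b1 b2 b3 : ℤ) :
    ((gq2 a0 a1 a2 a3 b0 b1 b2 b3 : ℤ) : ZMod 5) =
      gq2 (a0:ZMod 5) a1 a2 a3 b0 b1 b2 b3 := by
  simp only [gq2, gm2]; push_cast; ring
theorem cast_gq3 (a0 a1 a2 a3 b0 b1 b2 b3 : ℤ) :
    ((gq3 a0 a1 a2 a3 b0 b1 b2 b3 : ℤ) : ZMod 5) =
      gq3 (a0:ZMod 5) a1 a2 a3 b0 b1 b2 b3 := by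
  simp only [gq3, gm3]; push_cast; ring
theorem cast_gs0 (c0 c1 c2 c3 : ℤ) :
    ((gs0 c0 c1 c2 c3 : ℤ) : ZMod 5) = gs0 (c0:ZMod 5) c1 c2 c3 := by
  simp only [gs0, gm0]; push_cast; ring
theorem cast_gs1 (c0 c1 c2 c3 : ℤ) :
    ((gs1 c0 c1 c2 c3 : ℤ) : ZMod 5) = gs1 (c0:ZMod 5) c1 c2 c3 := by
  simp only [gs1, gm1]; push_cast; ring
theorem cast_gs2 (c0 c1 c2 c3 : ℤ) :
    ((gs2 c0 c1 c2 c3 : ℤ) : ZMod 5) = gs2 (c0:ZMod 5) c1 c2 c3 := by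
  simp only [gs2, gm2]; push_cast; ring
theorem cast_gs3 (c0 c1 c2 c3 : ℤ) :
    ((gs3 c0 c1 c2 c3 : ℤ) : ZMod 5) = gs3 (c0:ZMod 5) c1 c2 c3 := by
  simp only [gs3, gm3]; push_cast; ring

theorem ccast_gq0 (a0 a1 a2 a3 b0 b1 b2 b3 : ℤ) :
    ((gq0 a0 a1 a2 a3 b0 b1 b2 b3 : ℤ) : ℂ) =
      gq0 (a0:ℂ) a1 a2 a3 b0 b1 b2 b3 := by
  simp only [gq0, gm0]; push_cast; ring
theorem ccast_gq1 (a0 a1 a2 a3 b0 b1 b2 b3 : ℤ) :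
    ((gq1 a0 a1 a2 a3 b0 b1 b2 b3 : ℤ) : ℂ) =
      gq1 (a0:ℂ) a1 a2 a3 b0 b1 b2 b3 := by
  simp only [gq1, gm1]; push_cast; ring
theorem ccast_gq2 (a0 a1 a2 a3 b0 b1 b2 b3 : ℤ) :
    ((gq2 a0 a1 a2 a3 b0 b1 b2 b3 : ℤ) : ℂ) =
      gq2 (a0:ℂ) a1 a2 a3 b0 b1 b2 b3 := by
  simp only [gq2, gm2]; push_cast; ring
theorem ccast_gq3 (a0 a1 a2 a3 b0 b1 b2 b3 : ℤ) :
    ((gq3 a0 a1 a2 a3 b0 b1 b2 b3 : ℤ) : ℂ) =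
      gq3 (a0:ℂ) a1 a2 a3 b0 b1 b2 b3 := by
  simp only [gq3, gm3]; push_cast; ring

theorem five_eq_zero : (5 : ZMod 5) = 0 := by decide

/-- The 5-adic descent: the quadratic form `a² + ab - b²` on `ℤ[ζ₈]` never
takes the value `n²·ζ₈` with `n ≠ 0`. -/
theorem descent : ∀ n : ℕ, ∀ a0 a1 a2 a3 b0 b1 b2 b3 : ℤ,
    gq0 a0 a1 a2 a3 b0 b1 b2 b3 = 0 →
    gq1 a0 a1 a2 a3 b0 b1 b2 b3 = (n:ℤ)^2 →
    gq2 a0 a1 a2 a3 b0 b1 b2 b3 = 0 →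
    gq3 a0 a1 a2 a3 b0 b1 b2 b3 = 0 → n = 0 := by
  intro n
  induction n using Nat.strong_induction_on with
  | _ n ih =>
  intro a0 a1 a2 a3 b0 b1 b2 b3 h0 h1 h2 h3
  have H0 : gq0 (a0:ZMod 5) a1 a2 a3 b0 b1 b2 b3 = 0 := by
    rw [← cast_gq0, h0]; simp
  have H1 : gq1 (a0:ZMod 5) a1 a2 a3 b0 b1 b2 b3 = (n : ZMod 5)^2 := by
    rw [← cast_gq1, h1]; push_cast; ring
  have H2 : gq2 (a0:ZMod 5) a1 a2 a3 b0 b1 b2 b3 = 0 := by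
    rw [← cast_gq2, h2]; simp
  have H3 : gq3 (a0:ZMod 5) a1 a2 a3 b0 b1 b2 b3 = 0 := by
    rw [← cast_gq3, h3]; simp
  rw [id0, five_eq_zero, zero_mul, add_zero] at H0
  rw [id1, five_eq_zero, zero_mul, add_zero] at H1
  rw [id2, five_eq_zero, zero_mul, add_zero] at H2
  rw [id3, five_eq_zero, zero_mul, add_zero] at H3
  by_cases hdvd : 5 ∣ n
  · obtain ⟨n', rfl⟩ := hdvd
    rcases Nat.eq_zero_or_pos n' with rfl | hp
    · simp
    have H1' : gs1 ((a0:ZMod 5)+3*b0) ((a1:ZMod 5)+3*b1) ((a2:ZMod 5)+3*b2) ((a3:ZMod 5)+3*b3) = 0 := by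
      rw [H1]; push_cast [five_eq_zero]; ring
    obtain ⟨E0, E1, E2, E3⟩ := fact2 _ _ _ _ H0 H1' H2 H3
    have D0 : (5:ℤ) ∣ (a0 + 3*b0) := by
      exact_mod_cast (ZMod.intCast_zmod_eq_zero_iff_dvd _ 5).mp (by push_cast; exact E0)
    have D1 : (5:ℤ) ∣ (a1 + 3*b1) := by
      exact_mod_cast (ZMod.intCast_zmod_eq_zero_iff_dvd _ 5).mp (by push_cast; exact E1)
    have D2 : (5:ℤ) ∣ (a2 + 3*b2) := by
      exact_mod_cast (ZMod.intCast_zmod_eq_zero_iff_dvd _ 5).mp (by push_cast; exact E2)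
    have D3 : (5:ℤ) ∣ (a3 + 3*b3) := by
      exact_mod_cast (ZMod.intCast_zmod_eq_zero_iff_dvd _ 5).mp (by push_cast; exact E3)
    obtain ⟨d0, hd0⟩ := D0
    obtain ⟨d1, hd1⟩ := D1
    obtain ⟨d2, hd2⟩ := D2
    obtain ⟨d3, hd3⟩ := D3
    obtain rfl : a0 = 5*d0 - 3*b0 := by omega
    obtain rfl : a1 = 5*d1 - 3*b1 := by omega
    obtain rfl : a2 = 5*d2 - 3*b2 := by omega
    obtain rfl : a3 = 5*d3 - 3*b3 := by omega
    have hk : (((5*n' : ℕ):ℤ))^2 = 25 * ((n':ℤ))^2 := by push_cast; ring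
    have t0 : gs0 b0 b1 b2 b3 =
        5*gm0 d0 d1 d2 d3 b0 b1 b2 b3 - 5*gs0 d0 d1 d2 d3 := by
      have := idb0 d0 d1 d2 d3 b0 b1 b2 b3; linarith [h0]
    have t1 : gs1 b0 b1 b2 b3 =
        5*((n':ℤ)^2) + 5*gm1 d0 d1 d2 d3 b0 b1 b2 b3 - 5*gs1 d0 d1 d2 d3 := by
      have := idb1 d0 d1 d2 d3 b0 b1 b2 b3; linarith [h1, hk]
    have t2 : gs2 b0 b1 b2 b3 =
        5*gm2 d0 d1 d2 d3 b0 b1 b2 b3 - 5*gs2 d0 d1 d2 d3 := by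
      have := idb2 d0 d1 d2 d3 b0 b1 b2 b3; linarith [h2]
    have t3 : gs3 b0 b1 b2 b3 =
        5*gm3 d0 d1 d2 d3 b0 b1 b2 b3 - 5*gs3 d0 d1 d2 d3 := by
      have := idb3 d0 d1 d2 d3 b0 b1 b2 b3; linarith [h3]
    have U0 : gs0 (b0:ZMod 5) b1 b2 b3 = 0 := by
      rw [← cast_gs0, t0]; push_cast [five_eq_zero]; ring
    have U1 : gs1 (b0:ZMod 5) b1 b2 b3 = 0 := by
      rw [← cast_gs1, t1]; push_cast [five_eq_zero]; ring
    have U2 : gs2 (b0:ZMod 5) b1 b2 b3 = 0 := by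
      rw [← cast_gs2, t2]; push_cast [five_eq_zero]; ring
    have U3 : gs3 (b0:ZMod 5) b1 b2 b3 = 0 := by
      rw [← cast_gs3, t3]; push_cast [five_eq_zero]; ring
    obtain ⟨F0, F1, F2, F3⟩ := fact2 _ _ _ _ U0 U1 U2 U3
    have B0 : (5:ℤ) ∣ b0 := by
      exact_mod_cast (ZMod.intCast_zmod_eq_zero_iff_dvd _ 5).mp (by exact_mod_cast F0)
    have B1 : (5:ℤ) ∣ b1 := by
      exact_mod_cast (ZMod.intCast_zmod_eq_zero_iff_dvd _ 5).mp (by exact_mod_cast F1)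
    have B2 : (5:ℤ) ∣ b2 := by
      exact_mod_cast (ZMod.intCast_zmod_eq_zero_iff_dvd _ 5).mp (by exact_mod_cast F2)
    have B3 : (5:ℤ) ∣ b3 := by
      exact_mod_cast (ZMod.intCast_zmod_eq_zero_iff_dvd _ 5).mp (by exact_mod_cast F3)
    obtain ⟨e0, rfl⟩ := B0
    obtain ⟨e1, rfl⟩ := B1
    obtain ⟨e2, rfl⟩ := B2
    obtain ⟨e3, rfl⟩ := B3
    have f0 : gq0 (d0-3*e0) (d1-3*e1) (d2-3*e2) (d3-3*e3) e0 e1 e2 e3 = 0 := by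
      have := idc0 d0 d1 d2 d3 e0 e1 e2 e3; linarith [h0]
    have f1 : gq1 (d0-3*e0) (d1-3*e1) (d2-3*e2) (d3-3*e3) e0 e1 e2 e3 = (n':ℤ)^2 := by
      have := idc1 d0 d1 d2 d3 e0 e1 e2 e3; linarith [h1, hk]
    have f2 : gq2 (d0-3*e0) (d1-3*e1) (d2-3*e2) (d3-3*e3) e0 e1 e2 e3 = 0 := by
      have := idc2 d0 d1 d2 d3 e0 e1 e2 e3; linarith [h2]
    have f3 : gq3 (d0-3*e0) (d1-3*e1) (d2-3*e2) (d3-3*e3) e0 e1 e2 e3 = 0 := by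
      have := idc3 d0 d1 d2 d3 e0 e1 e2 e3; linarith [h3]
    have := ih n' (by omega) _ _ _ _ _ _ _ _ f0 f1 f2 f3
    omega
  · have hn0 := fact1 _ _ _ _ _ H0 H1 H2 H3
    rw [ZMod.natCast_eq_zero_iff] at hn0
    exact absurd hn0 hdvd

/-! ### Facts about `ζ₈` as a complex number -/

theorem zeta4 : ζ₈ ^ 4 = -1 := by
  rw [ζ₈, ← Complex.exp_nat_mul,
    show ((4:ℕ):ℂ) * (↑Real.pi * Complex.I / 4) = ↑Real.pi * Complex.I by push_cast; ring,
    Complex.exp_pi_mul_I]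

theorem zetaval : ζ₈ = ((Real.sqrt 2 : ℝ) : ℂ)/2 + (((Real.sqrt 2 : ℝ) : ℂ)/2) * I := by
  rw [ζ₈, show (↑Real.pi * Complex.I / 4 : ℂ) = ↑(Real.pi/4) * I by push_cast; ring,
    Complex.exp_mul_I, ← Complex.ofReal_cos, ← Complex.ofReal_sin,
    Real.cos_pi_div_four, Real.sin_pi_div_four]
  push_cast; ring

theorem sqrt2_sq : ((Real.sqrt 2 : ℝ) : ℂ)^2 = 2 := by
  rw [← Complex.ofReal_pow, Real.sq_sqrt (by norm_num : (2:ℝ) ≥ 0)]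
  norm_num

theorem zeta_sq : ζ₈^2 = I := by
  rw [zetaval]
  linear_combination (Complex.I/2) * sqrt2_sq + (((Real.sqrt 2:ℝ):ℂ)^2/4) * Complex.I_sq

theorem zeta_cube : ζ₈^3 = -(((Real.sqrt 2 : ℝ) : ℂ)/2) + (((Real.sqrt 2 : ℝ) : ℂ)/2) * I := by
  have : ζ₈^3 = ζ₈^2 * ζ₈ := by ring
  rw [this, zeta_sq, zetaval]
  linear_combination ((((Real.sqrt 2:ℝ):ℂ))/2) * Complex.I_sq

theorem key_re_im (x y : ℝ) (h : (x:ℂ) + (y:ℂ)*I = 0) : x = 0 ∧ y = 0 := by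
  have h1 := congrArg Complex.re h
  have h2 := congrArg Complex.im h
  simp at h1 h2
  exact ⟨h1, h2⟩

theorem rat_sqrt2 (u v : ℚ) (h : (u:ℝ) + (v:ℝ) * Real.sqrt 2 = 0) : u = 0 ∧ v = 0 := by
  by_cases hv : v = 0
  · subst hv; simp at h; exact ⟨by exact_mod_cast h, rfl⟩
  · exfalso
    apply irrational_sqrt_two
    refine ⟨-u/v, ?_⟩
    push_cast
    rw [div_eq_iff (by exact_mod_cast hv : ((v:ℝ)) ≠ 0)]
    linarith

/-- Linear independence of `1, ζ₈, ζ₈², ζ₈³` over `ℚ`. -/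
theorem inj (p q r s : ℚ)
    (h : (p:ℂ) + (q:ℂ)*ζ₈ + (r:ℂ)*ζ₈^2 + (s:ℂ)*ζ₈^3 = 0) :
    p = 0 ∧ q = 0 ∧ r = 0 ∧ s = 0 := by
  rw [zeta_sq, zeta_cube, zetaval] at h
  obtain ⟨hX, hY⟩ := key_re_im
    ((p:ℝ) + ((q:ℝ)-(s:ℝ))*(Real.sqrt 2/2)) ((r:ℝ) + ((q:ℝ)+(s:ℝ))*(Real.sqrt 2/2))
    (by push_cast; linear_combination h)
  obtain ⟨hp, hqs⟩ := rat_sqrt2 p ((q-s)/2) (by push_cast; linear_combination hX)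
  obtain ⟨hr, hqs'⟩ := rat_sqrt2 r ((q+s)/2) (by push_cast; linear_combination hY)
  refine ⟨hp, by linarith, hr, by linarith⟩

theorem expand (x0 x1 x2 x3 y0 y1 y2 y3 : ℂ) :
    (x0 + x1*ζ₈ + x2*ζ₈^2 + x3*ζ₈^3)^2
      + (x0 + x1*ζ₈ + x2*ζ₈^2 + x3*ζ₈^3)*(y0 + y1*ζ₈ + y2*ζ₈^2 + y3*ζ₈^3)
      - (y0 + y1*ζ₈ + y2*ζ₈^2 + y3*ζ₈^3)^2
    = gq0 x0 x1 x2 x3 y0 y1 y2 y3 + gq1 x0 x1 x2 x3 y0 y1 y2 y3 * ζ₈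
      + gq2 x0 x1 x2 x3 y0 y1 y2 y3 * ζ₈^2 + gq3 x0 x1 x2 x3 y0 y1 y2 y3 * ζ₈^3 := by
  simp only [gq0, gq1, gq2, gq3, gm0, gm1, gm2, gm3]
  linear_combination ((2*x1*x3 + x2^2 + x1*y3 + x2*y2 + x3*y1 - 2*y1*y3 - y2^2)
    + (2*x2*x3 + x2*y3 + x3*y2 - 2*y2*y3)*ζ₈ + (x3^2 + x3*y3 - y3^2)*ζ₈^2) * zeta4

theorem clearDen (t : ℚ) (N : ℕ) (h : t.den ∣ N) : ∃ k : ℤ, ((N:ℚ)) * t = (k:ℚ) := by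
  obtain ⟨m, rfl⟩ := h
  refine ⟨t.num * m, ?_⟩
  push_cast
  have key : (t.den:ℚ) * t = t.num := by
    have hd : ((t.den:ℚ)) ≠ 0 := by
      exact_mod_cast t.den_nz
    calc (t.den:ℚ) * t = (t.den:ℚ) * ((t.num:ℚ)/(t.den:ℚ)) := by rw [Rat.num_div_den]
      _ = t.num := by field_simp
  linear_combination (m:ℚ) * key

theorem theta_sum : θ + θbar = 1 := by
  rw [θ, θbar, ← Complex.ofReal_add]
  norm_num

theorem theta_prod : θ * θbar = -1 := by
  have h5 : Real.sqrt 5 ^ 2 = 5 := Real.sq_sqrt (by norm_num)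
  have hr : ((1+Real.sqrt 5)/2) * ((1-Real.sqrt 5)/2) = -1 := by nlinarith [h5]
  rw [θ, θbar, ← Complex.ofReal_mul, hr]
  norm_num

theorem main2 : ∀ a b : ℂ, a ∈ Fset → b ∈ Fset → a ^ 2 + a * b - b ^ 2 ≠ ζ₈ := by
  intro a b ha hb heq
  simp only [Fset, Set.mem_setOf_eq] at ha hb
  obtain ⟨p, q, r, s, rfl⟩ := ha
  obtain ⟨p', q', r', s', rfl⟩ := hb
  set N : ℕ := p.den * q.den * r.den * s.den * p'.den * q'.den * r'.den * s'.den with hN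
  have hN0 : N ≠ 0 := by
    simp only [hN]
    exact Nat.mul_ne_zero (Nat.mul_ne_zero (Nat.mul_ne_zero (Nat.mul_ne_zero
      (Nat.mul_ne_zero (Nat.mul_ne_zero (Nat.mul_ne_zero p.den_nz q.den_nz)
      r.den_nz) s.den_nz) p'.den_nz) q'.den_nz) r'.den_nz) s'.den_nz
  obtain ⟨A0, hA0⟩ := clearDen p N ⟨q.den * r.den * s.den * p'.den * q'.den * r'.den * s'.den, by rw [hN]; ring⟩
  obtain ⟨A1, hA1⟩ := clearDen q N ⟨p.den * r.den * s.den * p'.den * q'.den * r'.den * s'.den, by rw [hN]; ring⟩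
  obtain ⟨A2, hA2⟩ := clearDen r N ⟨p.den * q.den * s.den * p'.den * q'.den * r'.den * s'.den, by rw [hN]; ring⟩
  obtain ⟨A3, hA3⟩ := clearDen s N ⟨p.den * q.den * r.den * p'.den * q'.den * r'.den * s'.den, by rw [hN]; ring⟩
  obtain ⟨B0, hB0⟩ := clearDen p' N ⟨p.den * q.den * r.den * s.den * q'.den * r'.den * s'.den, by rw [hN]; ring⟩
  obtain ⟨B1, hB1⟩ := clearDen q' N ⟨p.den * q.den * r.den * s.den * p'.den * r'.den * s'.den, by rw [hN]; ring⟩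
  obtain ⟨B2, hB2⟩ := clearDen r' N ⟨p.den * q.den * r.den * s.den * p'.den * q'.den * s'.den, by rw [hN]; ring⟩
  obtain ⟨B3, hB3⟩ := clearDen s' N ⟨p.den * q.den * r.den * s.den * p'.den * q'.den * r'.den, by rw [hN]; ring⟩
  have cA0 : (N:ℂ) * (p:ℂ) = ((A0:ℤ):ℂ) := by exact_mod_cast congrArg (fun x : ℚ => (x:ℂ)) hA0
  have cA1 : (N:ℂ) * (q:ℂ) = ((A1:ℤ):ℂ) := by exact_mod_cast congrArg (fun x : ℚ => (x:ℂ)) hA1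
  have cA2 : (N:ℂ) * (r:ℂ) = ((A2:ℤ):ℂ) := by exact_mod_cast congrArg (fun x : ℚ => (x:ℂ)) hA2
  have cA3 : (N:ℂ) * (s:ℂ) = ((A3:ℤ):ℂ) := by exact_mod_cast congrArg (fun x : ℚ => (x:ℂ)) hA3
  have cB0 : (N:ℂ) * (p':ℂ) = ((B0:ℤ):ℂ) := by exact_mod_cast congrArg (fun x : ℚ => (x:ℂ)) hB0
  have cB1 : (N:ℂ) * (q':ℂ) = ((B1:ℤ):ℂ) := by exact_mod_cast congrArg (fun x : ℚ => (x:ℂ)) hB1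
  have cB2 : (N:ℂ) * (r':ℂ) = ((B2:ℤ):ℂ) := by exact_mod_cast congrArg (fun x : ℚ => (x:ℂ)) hB2
  have cB3 : (N:ℂ) * (s':ℂ) = ((B3:ℤ):ℂ) := by exact_mod_cast congrArg (fun x : ℚ => (x:ℂ)) hB3
  have hceq : ((A0:ℂ) + (A1:ℂ)*ζ₈ + (A2:ℂ)*ζ₈^2 + (A3:ℂ)*ζ₈^3)^2
      + ((A0:ℂ) + (A1:ℂ)*ζ₈ + (A2:ℂ)*ζ₈^2 + (A3:ℂ)*ζ₈^3)
        * ((B0:ℂ) + (B1:ℂ)*ζ₈ + (B2:ℂ)*ζ₈^2 + (B3:ℂ)*ζ₈^3)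
      - ((B0:ℂ) + (B1:ℂ)*ζ₈ + (B2:ℂ)*ζ₈^2 + (B3:ℂ)*ζ₈^3)^2
      = ((N:ℂ))^2 * ζ₈ := by
    rw [← cA0, ← cA1, ← cA2, ← cA3, ← cB0, ← cB1, ← cB2, ← cB3]
    linear_combination ((N:ℂ))^2 * heq
  rw [expand] at hceq
  obtain ⟨e0, e1, e2, e3⟩ := inj
    ((gq0 A0 A1 A2 A3 B0 B1 B2 B3 : ℤ) : ℚ)
    (((gq1 A0 A1 A2 A3 B0 B1 B2 B3 : ℤ) : ℚ) - (N:ℚ)^2)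
    ((gq2 A0 A1 A2 A3 B0 B1 B2 B3 : ℤ) : ℚ)
    ((gq3 A0 A1 A2 A3 B0 B1 B2 B3 : ℤ) : ℚ)
    (by push_cast
        rw [ccast_gq0, ccast_gq1, ccast_gq2, ccast_gq3]
        linear_combination hceq)
  have E0 : gq0 A0 A1 A2 A3 B0 B1 B2 B3 = 0 := by exact_mod_cast e0
  have E1 : gq1 A0 A1 A2 A3 B0 B1 B2 B3 = ((N:ℕ):ℤ)^2 := by
    have h' : ((gq1 A0 A1 A2 A3 B0 B1 B2 B3 : ℤ) : ℚ) = (N:ℚ)^2 := by linarith [e1]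
    exact_mod_cast h'
  have E2 : gq2 A0 A1 A2 A3 B0 B1 B2 B3 = 0 := by exact_mod_cast e2
  have E3 : gq3 A0 A1 A2 A3 B0 B1 B2 B3 = 0 := by exact_mod_cast e3
  exact hN0 (descent N A0 A1 A2 A3 B0 B1 B2 B3 E0 E1 E2 E3)

/-- `ζ₈` is not a relative norm of `K = ℚ(ζ₈, √5)` over `F = ℚ(ζ₈)`: for every
`z = a + bθ ∈ K` (with `a, b ∈ F`), `z·σ(z) = (a + bθ)(a + bθ̄) ≠ ζ₈`; equivalently,
for all `a, b ∈ F`, `a² + a·b − b² ≠ ζ₈`. -/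
theorem zeta8_not_a_norm :
    (∀ a b : ℂ, a ∈ Fset → b ∈ Fset → (a + b * θ) * (a + b * θbar) ≠ ζ₈) ∧
    (∀ a b : ℂ, a ∈ Fset → b ∈ Fset → a ^ 2 + a * b - b ^ 2 ≠ ζ₈) := by
  constructor
  · intro a b ha hb heq
    apply main2 a b ha hb
    linear_combination heq - (a*b)*theta_sum - (b^2)*theta_prod
  · exact main2
end

section
/- Let Γ = [[0, 1], [i, 0]]. If x, y ∈ K = ℚ(ζ₈, √5) satisfy the matrix equation Γ·Ξ(x, y) = τ(Ξ(x, y)), then x = 0 and y = 0. Equivalently, no nonzero element Θ = Ξ(x, y) of the matrix representation of the Golden division algebra satisfies ΓΘ = τ(Θ). -/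
open Complex Matrix

/-- The subfield `ℚ(i) = {p + q·i : p, q ∈ ℚ}` of `ℂ`, as a set. -/
def Qi : Set ℂ := {z | ∃ p q : ℚ, z = (p : ℂ) + (q : ℂ) * Complex.I}

/-- The element `x = x₀ + x₁ζ₈ + x₂θ + x₃ζ₈θ` of `K = ℚ(ζ₈, √5)` with coordinates
`x₀, x₁, x₂, x₃ ∈ ℚ(i)` over the basis `(1, ζ₈, θ, ζ₈θ)`. -/
noncomputable def emb (a : Fin 4 → ℂ) : ℂ := a 0 + a 1 * ζ₈ + a 2 * θ + a 3 * ζ₈ * θ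

/-- `σ(x) = x₀ + x₁ζ₈ + x₂θ̄ + x₃ζ₈θ̄` (the automorphism `σ` fixes `ℚ(ζ₈)`, `σ(√5) = −√5`). -/
noncomputable def embσ (a : Fin 4 → ℂ) : ℂ := a 0 + a 1 * ζ₈ + a 2 * θbar + a 3 * ζ₈ * θbar

/-- `τ(x) = x₀ − x₁ζ₈ + x₂θ − x₃ζ₈θ` (the automorphism `τ` fixes `√5`, `τ(ζ₈) = −ζ₈`). -/
noncomputable def embτ (a : Fin 4 → ℂ) : ℂ := a 0 - a 1 * ζ₈ + a 2 * θ - a 3 * ζ₈ * θ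

/-- `τ(σ(x)) = σ(τ(x)) = x₀ − x₁ζ₈ + x₂θ̄ − x₃ζ₈θ̄`. -/
noncomputable def embστ (a : Fin 4 → ℂ) : ℂ := a 0 - a 1 * ζ₈ + a 2 * θbar - a 3 * ζ₈ * θbar

/-- The Golden-code codeword matrix `Ξ(x, y) = [[x, y], [ζ₈·σ(y), σ(x)]]`. -/
noncomputable def Xi (a b : Fin 4 → ℂ) : Matrix (Fin 2) (Fin 2) ℂ :=
  !![emb a, emb b; ζ₈ * embσ b, embσ a]

/-- The entrywise image `τ(Ξ(x, y)) = [[τ(x), τ(y)], [τ(ζ₈)·τ(σ(y)), τ(σ(x))]]`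
`= [[τ(x), τ(y)], [−ζ₈·στ(y), στ(x)]]`. -/
noncomputable def tauXi (a b : Fin 4 → ℂ) : Matrix (Fin 2) (Fin 2) ℂ :=
  !![embτ a, embτ b; -ζ₈ * embστ b, embστ a]

/-- The matrix `Γ = [[0, 1], [i, 0]]` of the code `C_{(2,2,Γ)}`. -/
noncomputable def Γmat : Matrix (Fin 2) (Fin 2) ℂ := !![0, 1; Complex.I, 0]

lemma irr10 : Irrational (Real.sqrt 10) := by
  have := irrational_sqrt_natCast_iff (n := 10)
  rw [show ((10:ℕ):ℝ) = 10 by norm_num] at this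
  refine this.mpr ?_
  rintro ⟨r, hr⟩
  have : r < 4 := by nlinarith
  interval_cases r <;> omega

lemma irr5 : Irrational (Real.sqrt 5) := by
  have := (by norm_num : Nat.Prime 5).irrational_sqrt
  simpa using this

lemma R2 (p q : ℚ) (h : (p:ℝ) + q * Real.sqrt 2 = 0) : p = 0 ∧ q = 0 := by
  by_cases hq : q = 0
  · subst hq; simp at h; exact ⟨by exact_mod_cast h, rfl⟩
  · exfalso
    have : Real.sqrt 2 = ((-p/q : ℚ) : ℝ) := by
      push_cast
      field_simp
      linarith
    exact irrational_sqrt_two.ne_rat _ this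

lemma s2m : Real.sqrt 2 * Real.sqrt 2 = 2 := Real.mul_self_sqrt (by norm_num)
lemma s5m : Real.sqrt 5 * Real.sqrt 5 = 5 := Real.mul_self_sqrt (by norm_num)
lemma s25 : Real.sqrt 2 * Real.sqrt 5 = Real.sqrt 10 := by
  rw [← Real.sqrt_mul (by norm_num : (2:ℝ) ≥ 0)]; norm_num

lemma R3 (a b c : ℚ) (h : (a:ℝ) + b * Real.sqrt 2 + c * Real.sqrt 5 = 0) :
    a = 0 ∧ b = 0 ∧ c = 0 := by
  have hsq : ((a^2 + 2*b^2 - 5*c^2 : ℚ) : ℝ) + ((2*a*b : ℚ) : ℝ) * Real.sqrt 2 = 0 := by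
    push_cast
    linear_combination (a + b*Real.sqrt 2 - c*Real.sqrt 5) * h - b^2 * s2m + c^2 * s5m
  obtain ⟨h1, h2⟩ := R2 _ _ hsq
  have hab : a * b = 0 := by linarith [mul_comm a b]
  rcases mul_eq_zero.mp hab with ha | hb
  · -- a = 0 : b√2 + c√5 = 0, multiply by √2 : 2b + c√10 = 0
    by_cases hc : c = 0
    · refine ⟨ha, ?_, hc⟩
      have : (b:ℝ) * Real.sqrt 2 = 0 := by
        rw [ha, hc] at h; push_cast at h; linarith
      have hb : (b:ℝ) = 0 := by
        rcases mul_eq_zero.mp this with h' | h'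
        · exact h'
        · exact absurd h' (by positivity)
      exact_mod_cast hb
    · exfalso
      rw [ha] at h; push_cast at h
      have h' : 2*(b:ℝ) + (c:ℝ) * Real.sqrt 10 = 0 := by
        linear_combination Real.sqrt 2 * h - (b:ℝ) * s2m - (c:ℝ) * s25
      have hcne : (c:ℝ) ≠ 0 := by exact_mod_cast hc
      have h10 : Real.sqrt 10 = ((-2*b/c : ℚ) : ℝ) := by
        push_cast
        field_simp
        linear_combination h'
      exact irr10.ne_rat _ h10
  · -- b = 0 : a + c√5 = 0
    by_cases hc : c = 0
    · refine ⟨?_, hb, hc⟩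
      rw [hb, hc] at h; push_cast at h
      exact_mod_cast (by linarith : (a:ℝ) = 0)
    · exfalso
      have h5 : Real.sqrt 5 = ((-a/c : ℚ) : ℝ) := by
        rw [hb] at h; push_cast at h
        push_cast
        field_simp
        linarith
      exact irr5.ne_rat _ h5

lemma R4 (p q r s : ℚ)
    (h : (p:ℝ) + q * Real.sqrt 2 + r * Real.sqrt 5 + s * (Real.sqrt 2 * Real.sqrt 5) = 0) :
    p = 0 ∧ q = 0 ∧ r = 0 ∧ s = 0 := by
  -- multiply by (r - s√2)
  have key : ((p*r - 2*q*s : ℚ):ℝ) + ((q*r - p*s : ℚ):ℝ) * Real.sqrt 2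
      + ((r^2 - 2*s^2 : ℚ):ℝ) * Real.sqrt 5 = 0 := by
    push_cast
    linear_combination (r - s * Real.sqrt 2) * h + (q*s + s^2 * Real.sqrt 5) * s2m
  obtain ⟨h1, h2, h3⟩ := R3 _ _ _ key
  have hrs : r = 0 ∧ s = 0 := by
    by_cases hs : s = 0
    · constructor
      · nlinarith
      · exact hs
    · exfalso
      have hr2 : (r:ℚ)^2 = 2*s^2 := by linarith
      have hsne : (s:ℝ) ≠ 0 := by exact_mod_cast hs
      have : Real.sqrt 2 = ((|r / s| : ℚ):ℝ) := by
        rw [show ((|r / s| : ℚ):ℝ) = |((r:ℝ))/((s:ℝ))| by push_cast [abs_div]; ring]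
        rw [← Real.sqrt_sq_eq_abs]
        congr 1
        field_simp
        exact_mod_cast hr2.symm
      exact irrational_sqrt_two.ne_rat _ this
  obtain ⟨hr, hs⟩ := hrs
  rw [hr, hs] at h; push_cast at h
  have := R2 p q (by linarith)
  exact ⟨this.1, this.2, hr, hs⟩

lemma zeta_eq : ζ₈ = ((Real.sqrt 2 / 2 : ℝ) : ℂ) * (1 + Complex.I) := by
  unfold ζ₈
  rw [show (Real.pi : ℂ) * Complex.I / 4 = ((Real.pi / 4 : ℝ) : ℂ) * Complex.I by
    push_cast; ring]
  rw [Complex.exp_mul_I, ← Complex.ofReal_cos, ← Complex.ofReal_sin,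
    Real.cos_pi_div_four, Real.sin_pi_div_four]
  push_cast; ring

lemma zeta_sq_s5 : ζ₈ * ζ₈ = Complex.I := by
  rw [zeta_eq]
  have h2 : ((Real.sqrt 2 : ℝ) : ℂ) * ((Real.sqrt 2 : ℝ) : ℂ) = 2 := by
    rw [← Complex.ofReal_mul, Real.mul_self_sqrt (by norm_num)]; norm_num
  push_cast
  linear_combination ((1 + Complex.I) * (1 + Complex.I) / 4) * h2
    + (1 / 2 : ℂ) * Complex.I_mul_I

lemma thetabar_eq : θbar = 1 - θ := by
  unfold θbar θ; push_cast; ring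

lemma indep (c0 c1 c2 c3 : ℂ) (h0 : c0 ∈ Qi) (h1 : c1 ∈ Qi) (h2 : c2 ∈ Qi) (h3 : c3 ∈ Qi)
    (h : c0 + c1 * ζ₈ + c2 * θ + c3 * ζ₈ * θ = 0) :
    c0 = 0 ∧ c1 = 0 ∧ c2 = 0 ∧ c3 = 0 := by
  obtain ⟨p0, q0, rfl⟩ := h0
  obtain ⟨p1, q1, rfl⟩ := h1
  obtain ⟨p2, q2, rfl⟩ := h2
  obtain ⟨p3, q3, rfl⟩ := h3
  rw [zeta_eq] at h
  unfold θ at h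
  have hre := congrArg Complex.re h
  have him := congrArg Complex.im h
  simp [Complex.add_re, Complex.add_im, Complex.mul_re, Complex.mul_im] at hre him
  have Hre := R4 (4*p0 + 2*p2) (2*(p1 - q1) + (p3 - q3)) (2*p2) (p3 - q3) (by push_cast; linear_combination (4:ℝ) * hre)
  have Him := R4 (4*q0 + 2*q2) (2*(p1 + q1) + (p3 + q3)) (2*q2) (p3 + q3) (by push_cast; linear_combination (4:ℝ) * him)
  obtain ⟨e1, e2, e3, e4⟩ := Hre
  obtain ⟨f1, f2, f3, f4⟩ := Him
  have hp0 : p0 = 0 := by linarith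
  have hp1 : p1 = 0 := by linarith
  have hp2 : p2 = 0 := by linarith
  have hp3 : p3 = 0 := by linarith
  have hq0 : q0 = 0 := by linarith
  have hq1 : q1 = 0 := by linarith
  have hq2 : q2 = 0 := by linarith
  have hq3 : q3 = 0 := by linarith
  rw [hp0, hp1, hp2, hp3, hq0, hq1, hq2, hq3]
  norm_num

lemma Qi_add {x y : ℂ} (hx : x ∈ Qi) (hy : y ∈ Qi) : x + y ∈ Qi := by
  obtain ⟨p, q, rfl⟩ := hx; obtain ⟨r, s, rfl⟩ := hy
  exact ⟨p + r, q + s, by push_cast; ring⟩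

lemma Qi_neg {x : ℂ} (hx : x ∈ Qi) : -x ∈ Qi := by
  obtain ⟨p, q, rfl⟩ := hx; exact ⟨-p, -q, by push_cast; ring⟩

lemma Qi_sub {x y : ℂ} (hx : x ∈ Qi) (hy : y ∈ Qi) : x - y ∈ Qi := by
  simpa [sub_eq_add_neg] using Qi_add hx (Qi_neg hy)

lemma Qi_I_mul {x : ℂ} (hx : x ∈ Qi) : Complex.I * x ∈ Qi := by
  obtain ⟨p, q, rfl⟩ := hx
  exact ⟨-q, p, by push_cast; linear_combination (q:ℂ) * Complex.I_mul_I⟩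


/-- If `x, y ∈ K = ℚ(ζ₈, √5)` satisfy `Γ·Ξ(x, y) = τ(Ξ(x, y))`, then `x = 0` and `y = 0`:
no nonzero element `Θ = Ξ(x, y)` of the Golden division algebra satisfies `ΓΘ = τ(Θ)`. -/
theorem no_nonzero_solution_of_Gamma_eq :
    ∀ a b : Fin 4 → ℂ, (∀ i, a i ∈ Qi) → (∀ i, b i ∈ Qi) →
      Γmat * Xi a b = tauXi a b → emb a = 0 ∧ emb b = 0 := by
  intro a b ha hb h
  have h1 : ζ₈ * embσ b = embτ a := by
    have := congrFun (congrFun h 0) 0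
    simpa [Γmat, Xi, tauXi, Matrix.mul_apply, Fin.sum_univ_two] using this
  have h2 : embσ a = embτ b := by
    have := congrFun (congrFun h 0) 1
    simpa [Γmat, Xi, tauXi, Matrix.mul_apply, Fin.sum_univ_two] using this
  have h3 : Complex.I * emb a = -ζ₈ * embστ b := by
    have := congrFun (congrFun h 1) 0
    simpa [Γmat, Xi, tauXi, Matrix.mul_apply, Fin.sum_univ_two] using this
  have h4 : Complex.I * emb b = embστ a := by
    have := congrFun (congrFun h 1) 1
    simpa [Γmat, Xi, tauXi, Matrix.mul_apply, Fin.sum_univ_two] using this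
  simp only [emb, embσ, embτ, embστ] at h1 h2 h3 h4
  -- coefficient equations from each of the four entries
  have K1 := indep (a 0 - Complex.I * (b 1 + b 3)) (-(a 1) - b 0 - b 2) (a 2 + Complex.I * b 3)
      (-(a 3) + b 2)
    (Qi_sub (ha 0) (Qi_I_mul (Qi_add (hb 1) (hb 3))))
    (Qi_sub (Qi_sub (Qi_neg (ha 1)) (hb 0)) (hb 2))
    (Qi_add (ha 2) (Qi_I_mul (hb 3)))
    (Qi_add (Qi_neg (ha 3)) (hb 2))
    (by linear_combination -h1 + (b 1 + b 3 * θbar) * zeta_sq_s5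
          + (b 2 * ζ₈ + b 3 * Complex.I) * thetabar_eq)
  have K2 := indep (a 0 + a 2 - b 0) (a 1 + a 3 + b 1) (-(a 2) - b 2) (-(a 3) + b 3)
    (Qi_sub (Qi_add (ha 0) (ha 2)) (hb 0))
    (Qi_add (Qi_add (ha 1) (ha 3)) (hb 1))
    (Qi_sub (Qi_neg (ha 2)) (hb 2))
    (Qi_add (Qi_neg (ha 3)) (hb 3))
    (by linear_combination h2 - (a 2 + a 3 * ζ₈) * thetabar_eq)
  have K3 := indep (Complex.I * a 0 - Complex.I * (b 1 + b 3)) (Complex.I * a 1 + b 0 + b 2)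
      (Complex.I * a 2 + Complex.I * b 3) (Complex.I * a 3 - b 2)
    (Qi_sub (Qi_I_mul (ha 0)) (Qi_I_mul (Qi_add (hb 1) (hb 3))))
    (Qi_add (Qi_add (Qi_I_mul (ha 1)) (hb 0)) (hb 2))
    (Qi_add (Qi_I_mul (ha 2)) (Qi_I_mul (hb 3)))
    (Qi_sub (Qi_I_mul (ha 3)) (hb 2))
    (by linear_combination h3 + (b 1 + b 3 * θbar) * zeta_sq_s5
          + (b 3 * Complex.I - b 2 * ζ₈) * thetabar_eq)
  have K4 := indep (Complex.I * b 0 - a 0 - a 2) (Complex.I * b 1 + a 1 + a 3)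
      (Complex.I * b 2 + a 2) (Complex.I * b 3 - a 3)
    (Qi_sub (Qi_sub (Qi_I_mul (hb 0)) (ha 0)) (ha 2))
    (Qi_add (Qi_add (Qi_I_mul (hb 1)) (ha 1)) (ha 3))
    (Qi_add (Qi_I_mul (hb 2)) (ha 2))
    (Qi_sub (Qi_I_mul (hb 3)) (ha 3))
    (by linear_combination h4 + (a 2 - a 3 * ζ₈) * thetabar_eq)
  obtain ⟨k10, k11, k12, k13⟩ := K1
  obtain ⟨k20, k21, k22, k23⟩ := K2
  obtain ⟨k30, k31, k32, k33⟩ := K3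
  obtain ⟨k40, k41, k42, k43⟩ := K4
  have ha3 : a 3 = 0 := by
    linear_combination (-(1 + Complex.I) / 2) * k13 + (-(1 + Complex.I) / 2) * k33
      + (a 3 / 2) * Complex.I_mul_I
  have hb2 : b 2 = 0 := by linear_combination k13 + ha3
  have hb3 : b 3 = 0 := by linear_combination k23 + ha3
  have ha2 : a 2 = 0 := by linear_combination k12 - Complex.I * hb3
  have ha1 : a 1 = 0 := by
    linear_combination (-(1 + Complex.I) / 2) * k11 + (-(1 + Complex.I) / 2) * k31
      + (a 1 / 2) * Complex.I_mul_I
  have hb0 : b 0 = 0 := by linear_combination -k11 - ha1 - hb2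
  have hb1 : b 1 = 0 := by linear_combination k21 - ha1 - ha3
  have ha0 : a 0 = 0 := by linear_combination k10 + Complex.I * hb1 + Complex.I * hb3
  constructor <;> unfold emb
  · rw [ha0, ha1, ha2, ha3]; ring
  · rw [hb0, hb1, hb2, hb3]; ring
end
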